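/- Let λ : R → S be a homomorphism of commutative rings and σ : L⁻¹ → L⁰ a homomorphism of finitely generated projective R-modules. Then there is a natural isomorphism coker(Hom_S(σ ⊗_R S, − ⊗_R S)) ≅ coker(Hom_R(σ, −)) ⊗_R S of functors Mod-R → Mod-S. -/

import Mathlib

open TensorProduct

universe u

section DefFunctor

variable {R S : Type u} [CommRing R] [CommRing S] [Algebra R S]
variable {L1 L0 : Type u} [AddCommGroup L1] [AddCommGroup L0] [Module R L1] [Module R L0]

/-- `Def_σ(N) = coker(Hom_R(σ, N))`. -/
abbrev DefR (σ : L1 →ₗ[R] L0) (N : Type u) [AddCommGroup N] [Module R N] :=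
  (L1 →ₗ[R] N) ⧸ LinearMap.range (σ.lcomp R N)

/-- `Def_{σ ⊗ S}(N ⊗_R S) = coker(Hom_S(σ ⊗_R S, N ⊗_R S))`. -/
abbrev DefS {R S : Type u} [CommRing R] [CommRing S] [Algebra R S]
    {L1 L0 : Type u} [AddCommGroup L1] [AddCommGroup L0] [Module R L1] [Module R L0]
    (σ : L1 →ₗ[R] L0) (N : Type u) [AddCommGroup N] [Module R N] :=
  @HasQuotient.Quotient ((S ⊗[R] L1) →ₗ[S] (S ⊗[R] N)) _ (Submodule.hasQuotient (M := ((S ⊗[R] L1) →ₗ[S] (S ⊗[R] N))) (R := S))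
    (LinearMap.range ((σ.baseChange S).lcomp S (S ⊗[R] N)))

/-- The map `Def_σ(N) → Def_σ(N')` induced by `f : N → N'`. -/
noncomputable def defRMap (σ : L1 →ₗ[R] L0) {N N' : Type u}
    [AddCommGroup N] [Module R N] [AddCommGroup N'] [Module R N'] (f : N →ₗ[R] N') :
    DefR σ N →ₗ[R] DefR σ N' :=
  Submodule.mapQ _ _ (LinearMap.llcomp R L1 N N' f) (by
    rintro - ⟨g, rfl⟩
    exact ⟨f ∘ₗ g, by ext x; simp⟩)

/-- The map `Def_{σ⊗S}(N ⊗ S) → Def_{σ⊗S}(N' ⊗ S)` induced by `f : N → N'`. -/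
noncomputable def defSMap (σ : L1 →ₗ[R] L0) {N N' : Type u}
    [AddCommGroup N] [Module R N] [AddCommGroup N'] [Module R N'] (f : N →ₗ[R] N') :
    DefS (S := S) σ N →ₗ[S] DefS (S := S) σ N' :=
  Submodule.mapQ _ _
    (LinearMap.llcomp S (S ⊗[R] L1) (S ⊗[R] N) (S ⊗[R] N') (f.baseChange S)) (by
    rintro - ⟨g, rfl⟩
    exact ⟨f.baseChange S ∘ₗ g, by ext x; simp⟩)

end DefFunctor

section Stmt8Aux

variable {R S : Type u} [CommRing R] [CommRing S] [Algebra R S]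

/-- The natural base-change map `S ⊗ Hom_R(L, N) → Hom_S(S ⊗ L, S ⊗ N)`. -/
noncomputable def stmt8Alpha (L N : Type u) [AddCommGroup L] [Module R L]
    [AddCommGroup N] [Module R N] :
    S ⊗[R] (L →ₗ[R] N) →ₗ[S] (S ⊗[R] L →ₗ[S] S ⊗[R] N) :=
  (LinearMap.baseChangeHom R S L N).liftBaseChange S

@[simp] lemma stmt8Alpha_tmul {L N : Type u} [AddCommGroup L] [Module R L]
    [AddCommGroup N] [Module R N] (s : S) (h : L →ₗ[R] N) :
    stmt8Alpha L N (s ⊗ₜ h) = s • h.baseChange S := rfl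

/-- Extensionality helper for `S`-linear maps out of a base change. -/
lemma stmt8_ext {M : Type u} {P : Type*} [AddCommGroup M] [Module R M]
    [AddCommMonoid P] [Module S P] {φ ψ : S ⊗[R] M →ₗ[S] P}
    (h : ∀ (s : S) (m : M), φ (s ⊗ₜ m) = ψ (s ⊗ₜ m)) : φ = ψ := by
  ext x
  induction x using TensorProduct.induction_on with
  | zero => simp
  | tmul s m => exact h s m
  | add x y hx hy => rw [map_add, map_add, hx, hy]

lemma stmt8Alpha_nat {L F N : Type u} [AddCommGroup L] [Module R L]
    [AddCommGroup F] [Module R F] [AddCommGroup N] [Module R N] (f : L →ₗ[R] F) :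
    stmt8Alpha (S := S) L N ∘ₗ ((f.lcomp R N).baseChange S)
      = (f.baseChange S).lcomp S (S ⊗[R] N) ∘ₗ stmt8Alpha F N := by
  apply stmt8_ext
  intro s h
  simp only [LinearMap.comp_apply, LinearMap.baseChange_tmul, stmt8Alpha_tmul,
    LinearMap.lcomp_apply, LinearMap.lcomp_apply']
  rw [LinearMap.baseChange_comp, LinearMap.smul_comp]

/-- The auxiliary maps `N → Hom(Rⁿ, N)`, `x ↦ (f ↦ f i • x)`. -/
noncomputable def stmt8C (n : ℕ) (N : Type u) [AddCommGroup N] [Module R N] (i : Fin n) :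
    N →ₗ[R] ((Fin n → R) →ₗ[R] N) where
  toFun x := (LinearMap.proj i).smulRight x
  map_add' x y := LinearMap.ext fun f => by
    simp only [LinearMap.smulRight_apply, LinearMap.add_apply, smul_add]
  map_smul' r x := LinearMap.ext fun f => by
    simp only [LinearMap.smulRight_apply, RingHom.id_apply, LinearMap.smul_apply]
    rw [smul_comm]

lemma stmt8_single_sum (n : ℕ) (f : Fin n → R) :
    f = ∑ i, Pi.single i (f i) := by
  funext j
  simp [Pi.single_apply, Finset.sum_apply]

lemma stmt8_single_smul (n : ℕ) (f : Fin n → R) (i : Fin n) :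
    (Pi.single i (f i) : Fin n → R) = f i • (Pi.single i 1 : Fin n → R) := by
  funext j
  simp [Pi.single_apply]

lemma stmt8_sumC (n : ℕ) (N : Type u) [AddCommGroup N] [Module R N]
    (h : (Fin n → R) →ₗ[R] N) :
    ∑ i, stmt8C (R := R) n N i (h (Pi.single i 1)) = h := by
  refine LinearMap.ext fun f => ?_
  simp only [LinearMap.coe_sum, Finset.sum_apply, stmt8C, LinearMap.coe_mk,
    AddHom.coe_mk, LinearMap.smulRight_apply, LinearMap.proj_apply]
  conv_rhs => rw [stmt8_single_sum n f]
  rw [map_sum]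
  refine Finset.sum_congr rfl fun i _ => ?_
  rw [stmt8_single_smul, map_smul]

lemma stmt8Alpha_free_bij (n : ℕ) (N : Type u) [AddCommGroup N] [Module R N] :
    Function.Bijective (stmt8Alpha (R := R) (S := S) (Fin n → R) N) := by
  classical
  set L : Type u := (Fin n → R) with hL
  set β : ((S ⊗[R] L) →ₗ[S] S ⊗[R] N) →ₗ[S] S ⊗[R] (L →ₗ[R] N) :=
    ∑ i : Fin n, ((stmt8C n N i).baseChange S) ∘ₗ
      (LinearMap.applyₗ ((1 : S) ⊗ₜ[R] (Pi.single i 1 : L))) with hβ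
  have hβα : β ∘ₗ stmt8Alpha (S := S) L N = LinearMap.id := by
    apply stmt8_ext
    intro s h
    simp only [LinearMap.comp_apply, stmt8Alpha_tmul, hβ, LinearMap.sum_apply,
      LinearMap.smul_apply, LinearMap.id_apply, map_smul]
    have h1 : ∀ i : Fin n, ((stmt8C n N i).baseChange S)
        ((LinearMap.applyₗ ((1 : S) ⊗ₜ[R] (Pi.single i 1 : L))) (h.baseChange S))
        = (1 : S) ⊗ₜ[R] (stmt8C (R := R) n N i (h (Pi.single i 1))) := fun i => rfl
    simp only [h1]
    rw [← tmul_sum, stmt8_sumC, TensorProduct.smul_tmul', smul_eq_mul, mul_one]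
  have key : ∀ (w : S ⊗[R] N) (i : Fin n) (s : S) (f : L),
      stmt8Alpha (S := S) L N (((stmt8C n N i).baseChange S) w) (s ⊗ₜ f)
        = f i • s • w := by
    intro w i s f
    induction w using TensorProduct.induction_on with
    | zero => simp
    | tmul t x =>
      have h2 : ((stmt8C n N i).baseChange S) (t ⊗ₜ x)
          = t ⊗ₜ (stmt8C (R := R) n N i x) := rfl
      rw [h2, stmt8Alpha_tmul, LinearMap.smul_apply]
      have h3 : ((stmt8C (R := R) n N i x).baseChange S) (s ⊗ₜ f)
          = s ⊗ₜ (f i • x) := rfl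
      rw [h3, TensorProduct.smul_tmul' t s, TensorProduct.smul_tmul' s t,
        smul_eq_mul, smul_eq_mul, mul_comm t s, tmul_smul]
    | add x y hx hy =>
      rw [map_add, map_add, LinearMap.add_apply, hx, hy, smul_add, smul_add]
  have hαβ : stmt8Alpha (S := S) L N ∘ₗ β = LinearMap.id := by
    ext g : 1
    simp only [LinearMap.comp_apply, LinearMap.id_apply]
    refine stmt8_ext (R := R) (S := S) ?_
    intro s f
    rw [hβ]
    simp only [LinearMap.sum_apply, LinearMap.comp_apply, map_sum,
      LinearMap.coe_sum, Finset.sum_apply]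
    have h4 : ∀ i : Fin n, (LinearMap.applyₗ ((1 : S) ⊗ₜ[R] (Pi.single i 1 : L))) g
        = g ((1 : S) ⊗ₜ[R] (Pi.single i 1 : L)) := fun i => rfl
    simp only [h4, key]
    have hsf : (s ⊗ₜ[R] f : S ⊗[R] L)
        = ∑ i : Fin n, (f i) • (s • ((1 : S) ⊗ₜ[R] (Pi.single i 1 : L))) := by
      conv_lhs => rw [stmt8_single_sum n f]
      rw [tmul_sum]
      refine Finset.sum_congr rfl fun i _ => ?_
      rw [stmt8_single_smul, TensorProduct.smul_tmul', smul_eq_mul, mul_one, tmul_smul]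
    conv_rhs => rw [hsf, map_sum]
    refine Finset.sum_congr rfl fun i _ => ?_
    rw [LinearMap.map_smul_of_tower, map_smul]
  constructor
  · intro x y hxy
    have := congrArg (fun z => β z) hxy
    simpa [LinearMap.congr_fun hβα x, LinearMap.congr_fun hβα y] using
      (by simpa using congrArg β hxy :
        (β ∘ₗ stmt8Alpha (S := S) L N) x = (β ∘ₗ stmt8Alpha (S := S) L N) y)
  · intro y
    exact ⟨β y, LinearMap.congr_fun hαβ y⟩

lemma stmt8Alpha_bij (L : Type u) [AddCommGroup L] [Module R L]
    [Module.Finite R L] [Module.Projective R L]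
    (N : Type u) [AddCommGroup N] [Module R N] :
    Function.Bijective (stmt8Alpha (R := R) (S := S) L N) := by
  obtain ⟨n, p, hp⟩ := Module.Finite.exists_fin' R L
  obtain ⟨i, hi⟩ := Module.projective_lifting_property p LinearMap.id hp
  have hfree := stmt8Alpha_free_bij (R := R) (S := S) n N
  have hret : ∀ x : S ⊗[R] (L →ₗ[R] N),
      ((i.lcomp R N).baseChange S) (((p.lcomp R N).baseChange S) x) = x := by
    intro x
    rw [← LinearMap.comp_apply, ← LinearMap.baseChange_comp]
    have : (i.lcomp R N) ∘ₗ (p.lcomp R N) = LinearMap.id := by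
      ext h : 1
      simp only [LinearMap.comp_apply, LinearMap.lcomp_apply', LinearMap.id_apply]
      rw [LinearMap.comp_assoc, hi, LinearMap.comp_id]
    rw [this, LinearMap.baseChange_id, LinearMap.id_apply]
  constructor
  · intro x y hxy
    have h1 : stmt8Alpha (R := R) (S := S) (Fin n → R) N (((p.lcomp R N).baseChange S) x)
        = stmt8Alpha (R := R) (S := S) (Fin n → R) N (((p.lcomp R N).baseChange S) y) := by
      have hx := LinearMap.congr_fun (stmt8Alpha_nat (S := S) (N := N) p) x
      have hy := LinearMap.congr_fun (stmt8Alpha_nat (S := S) (N := N) p) y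
      simp only [LinearMap.comp_apply] at hx hy
      rw [hx, hy, hxy]
    have := hfree.1 h1
    rw [← hret x, ← hret y, this]
  · intro y
    obtain ⟨z, hz⟩ := hfree.2 (((p.baseChange S).lcomp S (S ⊗[R] N)) y)
    refine ⟨((i.lcomp R N).baseChange S) z, ?_⟩
    have hnat := LinearMap.congr_fun (stmt8Alpha_nat (S := S) (N := N) i) z
    simp only [LinearMap.comp_apply] at hnat
    rw [hnat, hz]
    simp only [LinearMap.lcomp_apply']
    rw [LinearMap.comp_assoc, ← LinearMap.baseChange_comp, hi, LinearMap.baseChange_id,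
      LinearMap.comp_id]

end Stmt8Aux

section Stmt8Main

variable {R S : Type u} [CommRing R] [CommRing S] [Algebra R S]
variable {L1 L0 : Type u} [AddCommGroup L1] [AddCommGroup L0] [Module R L1] [Module R L0]

/-- The backward map `S ⊗ DefR σ N → DefS σ N`, `s ⊗ [h] ↦ s • [h ⊗ S]`. -/
noncomputable def stmt8Psi (σ : L1 →ₗ[R] L0) (N : Type u) [AddCommGroup N] [Module R N] :
    S ⊗[R] DefR σ N →ₗ[S] DefS (S := S) σ N :=
  (Submodule.liftQ _
    (((Submodule.mkQ _ : ((S ⊗[R] L1) →ₗ[S] (S ⊗[R] N)) →ₗ[S] DefS (S := S) σ N).restrictScalars R)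
      ∘ₗ LinearMap.baseChangeHom R S L1 N)
    (by
      rintro - ⟨g, rfl⟩
      simp only [LinearMap.mem_ker, LinearMap.comp_apply, LinearMap.lcomp_apply',
        LinearMap.baseChangeHom_apply, LinearMap.restrictScalars_apply, Submodule.mkQ_apply]
      rw [Submodule.Quotient.mk_eq_zero]
      exact ⟨g.baseChange S, by rw [LinearMap.lcomp_apply', LinearMap.baseChange_comp]⟩)
    ).liftBaseChange S

@[simp] lemma stmt8Psi_tmul (σ : L1 →ₗ[R] L0) (N : Type u) [AddCommGroup N] [Module R N]
    (s : S) (h : L1 →ₗ[R] N) :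
    stmt8Psi σ N (s ⊗ₜ Submodule.Quotient.mk h)
      = s • Submodule.Quotient.mk (h.baseChange S) := rfl

variable [Module.Finite R L1] [Module.Projective R L1]
variable [Module.Finite R L0] [Module.Projective R L0]

/-- `stmt8Alpha` as an equivalence, for finite projective `L`. -/
noncomputable def stmt8AlphaEquiv (L N : Type u) [AddCommGroup L] [Module R L]
    [Module.Finite R L] [Module.Projective R L] [AddCommGroup N] [Module R N] :
    S ⊗[R] (L →ₗ[R] N) ≃ₗ[S] (S ⊗[R] L →ₗ[S] S ⊗[R] N) :=
  LinearEquiv.ofBijective _ (stmt8Alpha_bij (R := R) (S := S) L N)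

@[simp] lemma stmt8AlphaEquiv_apply (L N : Type u) [AddCommGroup L] [Module R L]
    [Module.Finite R L] [Module.Projective R L] [AddCommGroup N] [Module R N]
    (x : S ⊗[R] (L →ₗ[R] N)) :
    stmt8AlphaEquiv (S := S) L N x = stmt8Alpha (R := R) (S := S) L N x := rfl

/-- Base change of the quotient map. -/
noncomputable def stmt8Rho (σ : L1 →ₗ[R] L0) (N : Type u) [AddCommGroup N] [Module R N] :
    S ⊗[R] (L1 →ₗ[R] N) →ₗ[S] S ⊗[R] DefR σ N :=
  (Submodule.mkQ (LinearMap.range (σ.lcomp R N))).baseChange S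

/-- The forward map `DefS σ N → S ⊗ DefR σ N`. -/
noncomputable def stmt8Fwd (σ : L1 →ₗ[R] L0) (N : Type u) [AddCommGroup N] [Module R N] :
    DefS (S := S) σ N →ₗ[S] S ⊗[R] DefR σ N :=
  Submodule.liftQ _ (stmt8Rho σ N ∘ₗ (stmt8AlphaEquiv (S := S) L1 N).symm.toLinearMap) (by
    rintro - ⟨g', rfl⟩
    obtain ⟨z, hz⟩ := (stmt8Alpha_bij (R := R) (S := S) L0 N).2 g'
    have h1 : (stmt8AlphaEquiv (S := S) L1 N).symm (((σ.baseChange S).lcomp S (S ⊗[R] N)) g')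
        = ((σ.lcomp R N).baseChange S) z := by
      rw [LinearEquiv.symm_apply_eq]
      have hnat := LinearMap.congr_fun (stmt8Alpha_nat (S := S) (N := N) σ) z
      simp only [LinearMap.comp_apply] at hnat
      rw [stmt8AlphaEquiv_apply, hnat, hz]
    simp only [LinearMap.mem_ker, LinearMap.comp_apply, LinearEquiv.coe_coe, h1]
    rw [stmt8Rho, ← LinearMap.comp_apply, ← LinearMap.baseChange_comp]
    have hz0 : (Submodule.mkQ (LinearMap.range (σ.lcomp R N))) ∘ₗ (σ.lcomp R N)
        = (0 : (L0 →ₗ[R] N) →ₗ[R] DefR σ N) := by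
      refine LinearMap.ext fun g => ?_
      simp only [LinearMap.comp_apply, Submodule.mkQ_apply, LinearMap.zero_apply]
      rw [Submodule.Quotient.mk_eq_zero]
      exact ⟨g, rfl⟩
    rw [hz0]
    rw [show (0 : (L0 →ₗ[R] N) →ₗ[R] DefR σ N).baseChange S = 0 from
      map_zero (LinearMap.baseChangeHom R S _ _)]
    simp)

lemma stmt8_psi_rho (σ : L1 →ₗ[R] L0) (N : Type u) [AddCommGroup N] [Module R N] :
    stmt8Psi (S := S) σ N ∘ₗ stmt8Rho σ N
      = (Submodule.mkQ _ : ((S ⊗[R] L1) →ₗ[S] (S ⊗[R] N)) →ₗ[S] DefS (S := S) σ N) ∘ₗ stmt8Alpha (R := R) (S := S) L1 N := by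
  apply stmt8_ext
  intro s h
  simp only [LinearMap.comp_apply, stmt8Rho, LinearMap.baseChange_tmul, Submodule.mkQ_apply,
    stmt8Psi_tmul, stmt8Alpha_tmul, map_smul]

lemma stmt8_fwd_psi (σ : L1 →ₗ[R] L0) (N : Type u) [AddCommGroup N] [Module R N] :
    stmt8Fwd (S := S) σ N ∘ₗ stmt8Psi (S := S) σ N = LinearMap.id := by
  apply stmt8_ext
  intro s q
  obtain ⟨h, rfl⟩ := Submodule.mkQ_surjective _ q
  simp only [LinearMap.comp_apply, Submodule.mkQ_apply, stmt8Psi_tmul, map_smul,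
    LinearMap.id_apply]
  have h1 : stmt8Fwd (S := S) σ N (Submodule.Quotient.mk (h.baseChange S))
      = stmt8Rho σ N ((stmt8AlphaEquiv (S := S) L1 N).symm (h.baseChange S)) := by
    rw [stmt8Fwd, Submodule.liftQ_apply]
    rfl
  have h2 : (stmt8AlphaEquiv (S := S) L1 N).symm (h.baseChange S) = (1 : S) ⊗ₜ h := by
    rw [LinearEquiv.symm_apply_eq, stmt8AlphaEquiv_apply, stmt8Alpha_tmul, one_smul]
  rw [h1, h2]
  have h3 : stmt8Rho (S := S) σ N ((1 : S) ⊗ₜ h)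
      = (1 : S) ⊗ₜ (Submodule.Quotient.mk h : DefR σ N) := rfl
  rw [h3, TensorProduct.smul_tmul', smul_eq_mul, mul_one]

lemma stmt8_psi_fwd (σ : L1 →ₗ[R] L0) (N : Type u) [AddCommGroup N] [Module R N] :
    stmt8Psi (S := S) σ N ∘ₗ stmt8Fwd (S := S) σ N = LinearMap.id := by
  refine LinearMap.ext fun q => ?_
  obtain ⟨g, rfl⟩ := Submodule.mkQ_surjective _ q
  simp only [LinearMap.comp_apply, Submodule.mkQ_apply, LinearMap.id_apply]
  rw [stmt8Fwd, Submodule.liftQ_apply]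
  simp only [LinearMap.comp_apply, LinearEquiv.coe_coe]
  rw [← LinearMap.comp_apply, stmt8_psi_rho]
  simp only [LinearMap.comp_apply, Submodule.mkQ_apply]
  congr 1
  exact (stmt8AlphaEquiv (S := S) L1 N).apply_symm_apply g

/-- The isomorphism `DefS σ N ≃ S ⊗ DefR σ N`. -/
noncomputable def stmt8E (σ : L1 →ₗ[R] L0) (N : Type u) [AddCommGroup N] [Module R N] :
    DefS (S := S) σ N ≃ₗ[S] S ⊗[R] DefR σ N :=
  LinearEquiv.ofLinear (stmt8Fwd (S := S) σ N) (stmt8Psi (S := S) σ N)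
    (stmt8_fwd_psi σ N) (stmt8_psi_fwd σ N)

lemma stmt8E_symm (σ : L1 →ₗ[R] L0) (N : Type u) [AddCommGroup N] [Module R N]
    (x : S ⊗[R] DefR σ N) :
    (stmt8E (S := S) σ N).symm x = stmt8Psi (S := S) σ N x := rfl

lemma stmt8E_psi (σ : L1 →ₗ[R] L0) (N : Type u) [AddCommGroup N] [Module R N]
    (x : S ⊗[R] DefR σ N) :
    stmt8E (S := S) σ N (stmt8Psi (S := S) σ N x) = x := by
  rw [← stmt8E_symm, LinearEquiv.apply_symm_apply]

end Stmt8Main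


/-- for a homomorphism `λ : R → S` of commutative rings and a map
`σ : L⁻¹ → L⁰` of finitely generated projective `R`-modules, there is a natural
isomorphism `coker(Hom_S(σ ⊗_R S, − ⊗_R S)) ≅ coker(Hom_R(σ, −)) ⊗_R S` of functors
`Mod-R → Mod-S`.  The isomorphism is pinned down on generators (which also encodes
naturality, stated explicitly as the second conjunct). -/
theorem stmt8 {R S : Type u} [CommRing R] [CommRing S] [Algebra R S]
    {L1 L0 : Type u} [AddCommGroup L1] [AddCommGroup L0] [Module R L1] [Module R L0]
    [Module.Finite R L1] [Module.Projective R L1]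
    [Module.Finite R L0] [Module.Projective R L0]
    (σ : L1 →ₗ[R] L0) :
    ∃ e : ∀ (N : Type u) (_ : AddCommGroup N) (_ : Module R N),
        DefS (S := S) σ N ≃ₗ[S] (S ⊗[R] DefR σ N),
      (∀ (N : Type u) (i1 : AddCommGroup N) (i2 : Module R N) (s : S) (h : L1 →ₗ[R] N),
        (e N i1 i2).symm (s ⊗ₜ Submodule.Quotient.mk h) =
          s • Submodule.Quotient.mk (h.baseChange S)) ∧
      (∀ (N N' : Type u) (i1 : AddCommGroup N) (i2 : Module R N)
        (i1' : AddCommGroup N') (i2' : Module R N') (f : N →ₗ[R] N'),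
        (e N' i1' i2').toLinearMap ∘ₗ defSMap σ f =
          (defRMap σ f).baseChange S ∘ₗ (e N i1 i2).toLinearMap) := by
  refine ⟨fun N i1 i2 => stmt8E (S := S) σ N, ?_, ?_⟩
  · intro N i1 i2 s h
    rw [stmt8E_symm, stmt8Psi_tmul]
  · intro N N' i1 i2 i1' i2' f
    have hs : defSMap σ f ∘ₗ stmt8Psi (S := S) σ N
        = stmt8Psi (S := S) σ N' ∘ₗ (defRMap σ f).baseChange S := by
      apply stmt8_ext
      intro s q
      obtain ⟨h, rfl⟩ := Submodule.mkQ_surjective _ q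
      have hR : defRMap σ f (Submodule.Quotient.mk h : DefR σ N)
          = (Submodule.Quotient.mk (f ∘ₗ h) : DefR σ N') := rfl
      have hS2 : ∀ g : (S ⊗[R] L1) →ₗ[S] (S ⊗[R] N),
          defSMap (S := S) σ f (Submodule.Quotient.mk g : DefS (S := S) σ N)
            = (Submodule.Quotient.mk (f.baseChange S ∘ₗ g) : DefS (S := S) σ N') :=
        fun g => rfl
      simp only [LinearMap.comp_apply, Submodule.mkQ_apply, stmt8Psi_tmul, map_smul,
        LinearMap.baseChange_tmul, hR, hS2, stmt8Psi_tmul, ← LinearMap.baseChange_comp]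
    refine LinearMap.ext fun x => ?_
    simp only [LinearMap.comp_apply, LinearEquiv.coe_coe]
    conv_lhs => rw [show x = stmt8Psi (S := S) σ N ((stmt8E (S := S) σ N) x) from
      (((stmt8E (S := S) σ N).symm_apply_apply x).symm.trans (stmt8E_symm σ N _))]
    rw [← LinearMap.comp_apply (defSMap σ f), hs, LinearMap.comp_apply, stmt8E_psi]
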